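/- Let 0 = ω₀ < ω₁ < ... < ω_N = π and γ < minₙ (ω_{n+1}−ωₙ)/(ω_{n+1}+ωₙ). Define the empirical scaling and wavelet filters φ̂₁, ψ̂₁, ..., ψ̂_{N−1} piecewise via a transition function β with β=0 on (−∞,0], β=1 on [1,∞), β(x)+β(1−x)=1 on [0,1]. Then for all ω ∈ [0,π], |φ̂₁(ω)|² + Σₙ |ψ̂ₙ(ω)|² = 1 (partition of unity of squared filter magnitudes on [0,π]). -/
import Mathlib

theorem empirical_filter_bank_partition_of_unity
    (N : ℕ) (hN : 2 ≤ N)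
    (ω : ℕ → ℝ) (hω0 : ω 0 = 0) (hωN : ω N = Real.pi)
    (hmono : ∀ n < N, ω n < ω (n + 1))
    (γ : ℝ) (hγ0 : 0 < γ)
    (hγ : ∀ n < N, γ < (ω (n + 1) - ω n) / (ω (n + 1) + ω n))
    (β : ℝ → ℝ)
    (hβ0 : ∀ x ≤ (0 : ℝ), β x = 0) (hβ1 : ∀ x ≥ (1 : ℝ), β x = 1)
    (hβsym : ∀ x ∈ Set.Icc (0 : ℝ) 1, β x + β (1 - x) = 1)
    (φ : ℝ → ℝ) (ψ : ℕ → ℝ → ℝ)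
    (hφ : ∀ x ∈ Set.Icc (0 : ℝ) Real.pi,
      φ x = if x ≤ (1 - γ) * ω 1 then 1
        else if x ≤ (1 + γ) * ω 1 then
          Real.cos (Real.pi / 2 * β ((x - (1 - γ) * ω 1) / (2 * γ * ω 1)))
        else 0)
    (hψ : ∀ n, 1 ≤ n → n ≤ N - 1 → ∀ x ∈ Set.Icc (0 : ℝ) Real.pi,
      ψ n x =
        if x < (1 - γ) * ω n then 0
        else if x ≤ (1 + γ) * ω n then
          Real.sin (Real.pi / 2 * β ((x - (1 - γ) * ω n) / (2 * γ * ω n)))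
        else if n = N - 1 then 1
        else if x ≤ (1 - γ) * ω (n + 1) then 1
        else if x ≤ (1 + γ) * ω (n + 1) then
          Real.cos (Real.pi / 2 * β ((x - (1 - γ) * ω (n + 1)) / (2 * γ * ω (n + 1))))
        else 0) :
    ∀ x ∈ Set.Icc (0 : ℝ) Real.pi,
      |φ x| ^ 2 + ∑ n ∈ Finset.Icc 1 (N - 1), |ψ n x| ^ 2 = 1 := by
  intro x hx
  obtain ⟨K, rfl⟩ : ∃ K, N = K + 2 := ⟨N - 2, by omega⟩
  have hnn : ∀ n, n ≤ K + 2 → 0 ≤ ω n := by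
    intro n hn
    induction n with
    | zero => rw [hω0]
    | succ k ih =>
      have h1 := hmono k (by omega)
      have h2 := ih (by omega)
      linarith
  have hpos : ∀ n, 1 ≤ n → n ≤ K + 2 → 0 < ω n := by
    intro n h1 h2
    obtain ⟨k, rfl⟩ : ∃ k, n = k + 1 := ⟨n - 1, by omega⟩
    have := hmono k (by omega)
    have := hnn k (by omega)
    linarith
  have hsep : ∀ n, n < K + 2 → (1 + γ) * ω n < (1 - γ) * ω (n + 1) := by
    intro n hn
    have h := hγ n hn
    have h1 := hmono n hn
    have h2 := hnn n (by omega)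
    have hd : 0 < ω (n + 1) + ω n := by linarith
    rw [lt_div_iff₀ hd] at h
    nlinarith
  have hlh : ∀ n, 1 ≤ n → n ≤ K + 2 → (1 - γ) * ω n < (1 + γ) * ω n := by
    intro n h1 h2
    have := hpos n h1 h2
    nlinarith
  set a : ℕ → ℝ := fun n =>
    if x ≤ (1 - γ) * ω n then 1
    else if x ≤ (1 + γ) * ω n then
      (Real.cos (Real.pi / 2 * β ((x - (1 - γ) * ω n) / (2 * γ * ω n)))) ^ 2
    else 0 with ha
  have haval : ∀ n, a n =
      if x ≤ (1 - γ) * ω n then 1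
      else if x ≤ (1 + γ) * ω n then
        (Real.cos (Real.pi / 2 * β ((x - (1 - γ) * ω n) / (2 * γ * ω n)))) ^ 2
      else 0 := fun n => rfl
  have hphi : |φ x| ^ 2 = a 1 := by
    rw [hφ x hx, haval]
    split_ifs with h1 h2
    · simp
    · rw [sq_abs]
    · simp
  have hpsi : ∀ n, 1 ≤ n → n ≤ K → |ψ n x| ^ 2 = a (n + 1) - a n := by
    intro n h1 h2
    have hne : ¬ (n = K + 2 - 1) := by omega
    rw [hψ n h1 (by omega) x hx, haval (n + 1), haval n, if_neg hne]
    have hs1 := hsep n (by omega)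
    have hl1 := hlh n h1 (by omega)
    have hl2 := hlh (n + 1) (by omega) (by omega)
    split_ifs with c1 c2 c3 c4 c5 c6 c7 c8 c9 c10 c11 c12 c13 c14 c15 c16 <;>
      first
        | (exfalso; linarith)
        | (rw [sq_abs, Real.sin_sq]; done)
        | (rw [sq_abs]; ring1)
        | ((have hxe : x - (1 - γ) * ω n = 0 := by linarith);
           rw [hxe, zero_div, hβ0 0 le_rfl, mul_zero, Real.sin_zero]; simp)
        | simp
  have hlast : |ψ (K + 1) x| ^ 2 = 1 - a (K + 1) := by
    rw [hψ (K + 1) (by omega) (by omega) x hx, haval (K + 1),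
      if_pos (show K + 1 = K + 2 - 1 by omega)]
    have hl1 := hlh (K + 1) (by omega) (by omega)
    split_ifs with c1 c2 c3 c4 <;>
      first
        | (exfalso; linarith)
        | (rw [sq_abs, Real.sin_sq]; done)
        | ((have hxe : x - (1 - γ) * ω (K + 1) = 0 := by linarith);
           rw [hxe, zero_div, hβ0 0 le_rfl, mul_zero, Real.sin_zero]; simp)
        | simp
  have htel : ∀ m, (∑ n ∈ Finset.Icc 1 m, (a (n + 1) - a n)) = a (m + 1) - a 1 := by
    intro m
    induction m with
    | zero => simp
    | succ k ih =>
      rw [Finset.sum_Icc_succ_top (by omega : 1 ≤ k + 1), ih]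
      ring
  have hsum : ∑ n ∈ Finset.Icc 1 (K + 2 - 1), |ψ n x| ^ 2
      = (∑ n ∈ Finset.Icc 1 K, (a (n + 1) - a n)) + (1 - a (K + 1)) := by
    have hK : K + 2 - 1 = K + 1 := by omega
    rw [hK, Finset.sum_Icc_succ_top (by omega : 1 ≤ K + 1), hlast]
    congr 1
    apply Finset.sum_congr rfl
    intro n hn
    simp only [Finset.mem_Icc] at hn
    exact hpsi n hn.1 hn.2
  rw [hphi, hsum, htel]
  ring
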